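/- Under the stated assumptions, regarding the true period as a function P(y₀) of the initial displacement, one has lim_{y₀ → 0⁺} P(y₀) = P̄, where P̄ = 2π/√(2T/(mL)) is Rayleigh's approximate period; i.e., the true period converges to Rayleigh's approximate period as the initial displacement tends to zero. -/

import Mathlib

open Real MeasureTheory intervalIntegral Filter Topology

lemma aux_integrable {y₀ : ℝ} (h : 0 < y₀) :
    IntervalIntegrable (fun y => 1 / Real.sqrt (y₀ ^ 2 - y ^ 2)) volume 0 y₀ := by
  have h1 : IntervalIntegrable (fun x : ℝ => x ^ (-(1/2) : ℝ)) volume 0 y₀ :=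
    intervalIntegral.intervalIntegrable_rpow' (by norm_num)
  have h2 : IntervalIntegrable (fun y : ℝ => (y₀ - y) ^ (-(1/2) : ℝ)) volume 0 y₀ := by
    have := (h1.comp_sub_left y₀).symm
    simpa using this
  refine (h2.const_mul (y₀ ^ (-(1/2) : ℝ))).mono_fun ?_ ?_
  · apply Measurable.aestronglyMeasurable
    simp only [one_div]
    exact ((continuous_const.sub (continuous_pow 2)).sqrt.measurable).inv
  · rw [Filter.EventuallyLE, ae_restrict_iff' measurableSet_uIoc]
    refine Filter.Eventually.of_forall fun y hy => ?_
    rw [Set.uIoc_of_le h.le] at hy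
    obtain ⟨hy0, hy1⟩ := hy
    have hnn : 0 ≤ 1 / Real.sqrt (y₀ ^ 2 - y ^ 2) := by positivity
    have hrn : 0 ≤ y₀ ^ (-(1/2) : ℝ) * (y₀ - y) ^ (-(1/2) : ℝ) :=
      mul_nonneg (Real.rpow_nonneg h.le _) (Real.rpow_nonneg (by linarith) _)
    rw [Real.norm_eq_abs, Real.norm_eq_abs, abs_of_nonneg hnn, abs_of_nonneg hrn]
    rcases eq_or_lt_of_le hy1 with rfl | hlt
    · simp [Real.zero_rpow (show ((-(1/2):ℝ)) ≠ 0 by norm_num)]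
    · have h1' : (0:ℝ) < y₀ - y := by linarith
      rw [Real.rpow_neg h.le, Real.rpow_neg h1'.le,
        ← Real.sqrt_eq_rpow, ← Real.sqrt_eq_rpow, ← mul_inv, ← Real.sqrt_mul h.le]
      rw [one_div]
      apply inv_anti₀
      · positivity
      · apply Real.sqrt_le_sqrt; nlinarith

lemma aux_integral {y₀ : ℝ} (h : 0 < y₀) :
    ∫ y in (0:ℝ)..y₀, 1 / Real.sqrt (y₀ ^ 2 - y ^ 2) = π / 2 := by
  have key := intervalIntegral.integral_eq_sub_of_hasDeriv_right_of_le (a := 0) (b := y₀)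
      (f := fun y => Real.arcsin (y / y₀)) (f' := fun y => 1 / Real.sqrt (y₀ ^ 2 - y ^ 2))
      h.le
      ((Real.continuous_arcsin.comp (continuous_id.div_const y₀)).continuousOn)
      (fun x hx => ?_) (aux_integrable h)
  · rw [key]; simp [div_self h.ne', Real.arcsin_one]
  · obtain ⟨hx0, hx1⟩ := hx
    have h1 : x / y₀ ≠ -1 := by
      have : (0:ℝ) < x / y₀ := by positivity
      linarith
    have h2 : x / y₀ ≠ 1 := ne_of_lt ((div_lt_one h).2 hx1)
    have hd := (Real.hasDerivAt_arcsin h1 h2).comp x ((hasDerivAt_id x).div_const y₀)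
    have hval : Real.sqrt (y₀ ^ 2 - x ^ 2) = Real.sqrt (1 - (x / y₀) ^ 2) * y₀ := by
      rw [show y₀ ^ 2 - x ^ 2 = (1 - (x / y₀) ^ 2) * y₀ ^ 2 by field_simp,
        Real.sqrt_mul' _ (sq_nonneg y₀), Real.sqrt_sq h.le]
    have : (1 / Real.sqrt (1 - (x / y₀) ^ 2)) * (1 / y₀) = 1 / Real.sqrt (y₀ ^ 2 - x ^ 2) := by
      rw [hval, one_div_mul_one_div]
    simp only [← this]
    exact hd.hasDerivWithinAt

lemma aux_bound (L₀ L : ℝ) (hL₀ : 0 < L₀) (hL : 0 < L) (hLL : L₀ < L) {y₀ : ℝ} (h : 0 < y₀) :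
    (Real.sqrt (1 / L₀ - (Real.sqrt (L ^ 2 + y₀ ^ 2))⁻¹))⁻¹ * (π / 2) ≤
      (∫ y in (0:ℝ)..y₀, 1 / (Real.sqrt (y₀ ^ 2 - y ^ 2) *
        Real.sqrt (1 / L₀ - 2 / (Real.sqrt (L ^ 2 + y ^ 2) + Real.sqrt (L ^ 2 + y₀ ^ 2))))) ∧
    (∫ y in (0:ℝ)..y₀, 1 / (Real.sqrt (y₀ ^ 2 - y ^ 2) *
        Real.sqrt (1 / L₀ - 2 / (Real.sqrt (L ^ 2 + y ^ 2) + Real.sqrt (L ^ 2 + y₀ ^ 2))))) ≤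
      (Real.sqrt (1 / L₀ - 1 / L))⁻¹ * (π / 2) := by
  set c : ℝ := 1 / L₀ - 1 / L with hc_def
  set c₁ : ℝ := 1 / L₀ - (Real.sqrt (L ^ 2 + y₀ ^ 2))⁻¹ with hc₁_def
  have hc : 0 < c := by
    rw [hc_def, sub_pos]
    exact one_div_lt_one_div_of_lt hL₀ hLL
  have hsq : 0 < Real.sqrt (L ^ 2 + y₀ ^ 2) := Real.sqrt_pos.2 (by positivity)
  have hLy : L ≤ Real.sqrt (L ^ 2 + y₀ ^ 2) :=
    Real.le_sqrt' hL |>.2 (by nlinarith [sq_nonneg y₀])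
  have hcc₁ : c ≤ c₁ := by
    have : (Real.sqrt (L ^ 2 + y₀ ^ 2))⁻¹ ≤ L⁻¹ := inv_anti₀ hL hLy
    rw [hc_def, hc₁_def, one_div L]
    linarith
  have hc₁ : 0 < c₁ := lt_of_lt_of_le hc hcc₁
  -- pointwise bounds on g
  have hg : ∀ y ∈ Set.Icc (0:ℝ) y₀,
      c ≤ 1 / L₀ - 2 / (Real.sqrt (L ^ 2 + y ^ 2) + Real.sqrt (L ^ 2 + y₀ ^ 2)) ∧
      1 / L₀ - 2 / (Real.sqrt (L ^ 2 + y ^ 2) + Real.sqrt (L ^ 2 + y₀ ^ 2)) ≤ c₁ := by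
    intro y hy
    obtain ⟨hy0, hy1⟩ := hy
    have h1 : L ≤ Real.sqrt (L ^ 2 + y ^ 2) :=
      Real.le_sqrt' hL |>.2 (by nlinarith [sq_nonneg y])
    have h2 : Real.sqrt (L ^ 2 + y ^ 2) ≤ Real.sqrt (L ^ 2 + y₀ ^ 2) :=
      Real.sqrt_le_sqrt (by nlinarith)
    set S : ℝ := Real.sqrt (L ^ 2 + y ^ 2) + Real.sqrt (L ^ 2 + y₀ ^ 2) with hS_def
    have hS0 : 0 < S := by positivity
    constructor
    · have : 2 / S ≤ 1 / L := (div_le_div_iff₀ hS0 hL).2 (by nlinarith)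
      rw [hc_def]; linarith
    · have : (Real.sqrt (L ^ 2 + y₀ ^ 2))⁻¹ ≤ 2 / S := by
        rw [inv_eq_one_div]
        exact (div_le_div_iff₀ hsq hS0).2 (by nlinarith)
      rw [hc₁_def]; linarith
  -- pointwise bounds on integrand
  have hpt : ∀ y ∈ Set.Icc (0:ℝ) y₀,
      (Real.sqrt c₁)⁻¹ * (1 / Real.sqrt (y₀ ^ 2 - y ^ 2)) ≤
        1 / (Real.sqrt (y₀ ^ 2 - y ^ 2) *
          Real.sqrt (1 / L₀ - 2 / (Real.sqrt (L ^ 2 + y ^ 2) + Real.sqrt (L ^ 2 + y₀ ^ 2)))) ∧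
      1 / (Real.sqrt (y₀ ^ 2 - y ^ 2) *
          Real.sqrt (1 / L₀ - 2 / (Real.sqrt (L ^ 2 + y ^ 2) + Real.sqrt (L ^ 2 + y₀ ^ 2)))) ≤
        (Real.sqrt c)⁻¹ * (1 / Real.sqrt (y₀ ^ 2 - y ^ 2)) := by
    intro y hy
    obtain ⟨hgl, hgu⟩ := hg y hy
    set G : ℝ := 1 / L₀ - 2 / (Real.sqrt (L ^ 2 + y ^ 2) + Real.sqrt (L ^ 2 + y₀ ^ 2)) with hG_def
    have hG0 : 0 < G := lt_of_lt_of_le hc hgl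
    rcases eq_or_lt_of_le (Real.sqrt_nonneg (y₀ ^ 2 - y ^ 2)) with hA | hA
    · simp [← hA]
    constructor
    · have h1 : (Real.sqrt c₁)⁻¹ ≤ (Real.sqrt G)⁻¹ :=
        inv_anti₀ (Real.sqrt_pos.2 hG0) (Real.sqrt_le_sqrt hgu)
      calc (Real.sqrt c₁)⁻¹ * (1 / Real.sqrt (y₀ ^ 2 - y ^ 2))
          ≤ (Real.sqrt G)⁻¹ * (1 / Real.sqrt (y₀ ^ 2 - y ^ 2)) :=
            mul_le_mul_of_nonneg_right h1 (by positivity)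
        _ = 1 / (Real.sqrt (y₀ ^ 2 - y ^ 2) * Real.sqrt G) := by
            rw [one_div, one_div, mul_inv]; ring
    · have h1 : (Real.sqrt G)⁻¹ ≤ (Real.sqrt c)⁻¹ :=
        inv_anti₀ (Real.sqrt_pos.2 hc) (Real.sqrt_le_sqrt hgl)
      calc 1 / (Real.sqrt (y₀ ^ 2 - y ^ 2) * Real.sqrt G)
          = (Real.sqrt G)⁻¹ * (1 / Real.sqrt (y₀ ^ 2 - y ^ 2)) := by
            rw [one_div, one_div, mul_inv]; ring
        _ ≤ (Real.sqrt c)⁻¹ * (1 / Real.sqrt (y₀ ^ 2 - y ^ 2)) :=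
            mul_le_mul_of_nonneg_right h1 (by positivity)
  -- integrability
  have hbase := aux_integrable h
  have hLoInt : IntervalIntegrable
      (fun y => (Real.sqrt c₁)⁻¹ * (1 / Real.sqrt (y₀ ^ 2 - y ^ 2))) volume 0 y₀ :=
    hbase.const_mul _
  have hUpInt : IntervalIntegrable
      (fun y => (Real.sqrt c)⁻¹ * (1 / Real.sqrt (y₀ ^ 2 - y ^ 2))) volume 0 y₀ :=
    hbase.const_mul _
  have hFmeas : Measurable (fun y : ℝ => 1 / (Real.sqrt (y₀ ^ 2 - y ^ 2) *
      Real.sqrt (1 / L₀ - 2 / (Real.sqrt (L ^ 2 + y ^ 2) + Real.sqrt (L ^ 2 + y₀ ^ 2))))) := by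
    apply Measurable.div measurable_const
    apply Measurable.mul
    · exact ((continuous_const.sub (continuous_pow 2)).sqrt).measurable
    · have md : Measurable fun y : ℝ =>
          Real.sqrt (L ^ 2 + y ^ 2) + Real.sqrt (L ^ 2 + y₀ ^ 2) :=
        (((continuous_const.add (continuous_pow 2)).sqrt).add continuous_const).measurable
      exact Real.continuous_sqrt.measurable.comp
        (measurable_const.sub (measurable_const.div md))
  have hFInt : IntervalIntegrable (fun y : ℝ => 1 / (Real.sqrt (y₀ ^ 2 - y ^ 2) *
      Real.sqrt (1 / L₀ - 2 / (Real.sqrt (L ^ 2 + y ^ 2) + Real.sqrt (L ^ 2 + y₀ ^ 2))))) volume 0 y₀ := by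
    refine hUpInt.mono_fun hFmeas.aestronglyMeasurable ?_
    rw [Filter.EventuallyLE, ae_restrict_iff' measurableSet_uIoc]
    refine Filter.Eventually.of_forall fun y hy => ?_
    rw [Set.uIoc_of_le h.le] at hy
    have hy' : y ∈ Set.Icc (0:ℝ) y₀ := ⟨hy.1.le, hy.2⟩
    have h1 := (hpt y hy').2
    have hnn : (0:ℝ) ≤ 1 / (Real.sqrt (y₀ ^ 2 - y ^ 2) *
        Real.sqrt (1 / L₀ - 2 / (Real.sqrt (L ^ 2 + y ^ 2) + Real.sqrt (L ^ 2 + y₀ ^ 2)))) := by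
      positivity
    have hnn2 : (0:ℝ) ≤ (Real.sqrt c)⁻¹ * (1 / Real.sqrt (y₀ ^ 2 - y ^ 2)) := by positivity
    rw [Real.norm_eq_abs, Real.norm_eq_abs, abs_of_nonneg hnn, abs_of_nonneg hnn2]
    exact h1
  constructor
  · calc (Real.sqrt c₁)⁻¹ * (π / 2)
        = ∫ y in (0:ℝ)..y₀, (Real.sqrt c₁)⁻¹ * (1 / Real.sqrt (y₀ ^ 2 - y ^ 2)) := by
          rw [intervalIntegral.integral_const_mul, aux_integral h]
      _ ≤ _ := intervalIntegral.integral_mono_on h.le hLoInt hFInt (fun y hy => (hpt y hy).1)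
  · calc _ ≤ ∫ y in (0:ℝ)..y₀, (Real.sqrt c)⁻¹ * (1 / Real.sqrt (y₀ ^ 2 - y ^ 2)) :=
          intervalIntegral.integral_mono_on h.le hFInt hUpInt (fun y hy => (hpt y hy).2)
      _ = (Real.sqrt c)⁻¹ * (π / 2) := by
          rw [intervalIntegral.integral_const_mul, aux_integral h]

theorem rayleigh_period_tendsto_approx
    (σ m L₀ L T Pbar : ℝ)
    (hσ : 0 < σ) (hm : 0 < m) (hL₀ : 0 < L₀) (hL : 0 < L)
    (hLL : L₀ < L)
    (hT : T = σ * (L - L₀) / L₀)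
    (hPbar : Pbar = 2 * Real.pi / Real.sqrt (2 * T / (m * L))) :
    Filter.Tendsto
      (fun y₀ : ℝ => 4 * Real.sqrt (m / (2 * σ)) *
        ∫ y in (0:ℝ)..y₀,
          1 / (Real.sqrt (y₀ ^ 2 - y ^ 2) *
            Real.sqrt (1 / L₀ -
              2 / (Real.sqrt (L ^ 2 + y ^ 2) + Real.sqrt (L ^ 2 + y₀ ^ 2)))))
      (nhdsWithin 0 (Set.Ioi 0)) (nhds Pbar) := by
  have hc : 0 < 1 / L₀ - 1 / L := by
    rw [sub_pos]; exact one_div_lt_one_div_of_lt hL₀ hLL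
  have hT0 : 0 < T := by
    rw [hT]; exact div_pos (mul_pos hσ (sub_pos.2 hLL)) hL₀
  have hs : (0:ℝ) < Real.sqrt (m / (2 * σ)) := Real.sqrt_pos.2 (by positivity)
  have hu : (0:ℝ) < Real.sqrt (2 * T / (m * L)) := Real.sqrt_pos.2 (by positivity)
  have key : Real.sqrt (2 * T / (m * L)) * Real.sqrt (m / (2 * σ)) =
      Real.sqrt (1 / L₀ - 1 / L) := by
    rw [← Real.sqrt_mul (by positivity)]
    congr 1
    rw [hT]; field_simp
  have E : 4 * Real.sqrt (m / (2 * σ)) * ((Real.sqrt (1 / L₀ - 1 / L))⁻¹ * (π / 2)) = Pbar := by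
    rw [hPbar, ← key]
    field_simp
    ring
  -- lower comparison function tendsto Pbar
  have c0 : Continuous fun y₀ : ℝ => Real.sqrt (L ^ 2 + y₀ ^ 2) :=
    (continuous_const.add (continuous_pow 2)).sqrt
  have t0 : Tendsto (fun y₀ : ℝ => Real.sqrt (L ^ 2 + y₀ ^ 2)) (nhds 0) (nhds L) := by
    have := c0.tendsto 0
    simpa [Real.sqrt_sq hL.le] using this
  have t1 : Tendsto (fun y₀ : ℝ => (Real.sqrt (L ^ 2 + y₀ ^ 2))⁻¹) (nhds 0) (nhds L⁻¹) :=
    t0.inv₀ hL.ne'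
  have t2 : Tendsto (fun y₀ : ℝ => 1 / L₀ - (Real.sqrt (L ^ 2 + y₀ ^ 2))⁻¹) (nhds 0)
      (nhds (1 / L₀ - 1 / L)) := by
    rw [one_div L]
    exact tendsto_const_nhds.sub t1
  have t3 : Tendsto (fun y₀ : ℝ => Real.sqrt (1 / L₀ - (Real.sqrt (L ^ 2 + y₀ ^ 2))⁻¹)) (nhds 0)
      (nhds (Real.sqrt (1 / L₀ - 1 / L))) :=
    (Real.continuous_sqrt.tendsto _).comp t2
  have t4 := t3.inv₀ (ne_of_gt (Real.sqrt_pos.2 hc))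
  have t5 : Tendsto (fun y₀ : ℝ => 4 * Real.sqrt (m / (2 * σ)) *
      ((Real.sqrt (1 / L₀ - (Real.sqrt (L ^ 2 + y₀ ^ 2))⁻¹))⁻¹ * (π / 2)))
      (nhdsWithin 0 (Set.Ioi 0)) (nhds Pbar) := by
    rw [← E]
    exact ((t4.mul_const (π / 2)).const_mul _).mono_left nhdsWithin_le_nhds
  refine tendsto_of_tendsto_of_tendsto_of_le_of_le' t5 tendsto_const_nhds ?_ ?_
  · filter_upwards [self_mem_nhdsWithin] with y₀ (hy₀ : 0 < y₀)
    exact mul_le_mul_of_nonneg_left (aux_bound L₀ L hL₀ hL hLL hy₀).1 (by positivity)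
  · filter_upwards [self_mem_nhdsWithin] with y₀ (hy₀ : 0 < y₀)
    calc 4 * Real.sqrt (m / (2 * σ)) * ∫ y in (0:ℝ)..y₀, 1 / (Real.sqrt (y₀ ^ 2 - y ^ 2) *
          Real.sqrt (1 / L₀ - 2 / (Real.sqrt (L ^ 2 + y ^ 2) + Real.sqrt (L ^ 2 + y₀ ^ 2))))
        ≤ 4 * Real.sqrt (m / (2 * σ)) * ((Real.sqrt (1 / L₀ - 1 / L))⁻¹ * (π / 2)) :=
          mul_le_mul_of_nonneg_left (aux_bound L₀ L hL₀ hL hLL hy₀).2 (by positivity)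
      _ = Pbar := E
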